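/- arXiv:1605.00247 — 2 statements merged into one kernel-verified Lean document; each statement's English description precedes it below -/
import Mathlib

section
/- Let f be the arc of a circle of radius r > R, with angular span less than π, represented as a function on [−R, R] with f(−R) = f(R) = 0, lying above the chord. Then f minimizes the functional G_r(h) = ∫_{−R}^{R} (√(1 + h'(x)²) − h(x)/r) dx among all Lipschitz functions h on [−R, R] with h(−R) = h(R) = 0. -/
open Real intervalIntegral

open MeasureTheory Filter Set Topology in
/-- Tangent-line inequality for the convex function `p ↦ √(1+p²)`. -/
lemma sqrt_tangent_le (p q : ℝ) :
    Real.sqrt (1 + p^2) + (q - p) * (p / Real.sqrt (1 + p^2)) ≤ Real.sqrt (1 + q^2) := by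
  have hp : (0:ℝ) < 1 + p^2 := by positivity
  have hq : (0:ℝ) < 1 + q^2 := by positivity
  have hsp : 0 < Real.sqrt (1 + p^2) := Real.sqrt_pos.2 hp
  have hsp2 : Real.sqrt (1+p^2)^2 = 1 + p^2 := Real.sq_sqrt hp.le
  have hsq2 : Real.sqrt (1+q^2)^2 = 1 + q^2 := Real.sq_sqrt hq.le
  set sp := Real.sqrt (1+p^2)
  set sq := Real.sqrt (1+q^2)
  have h1 : (1 + p*q)^2 ≤ (sp*sq)^2 := by
    rw [mul_pow, hsp2, hsq2]; nlinarith [sq_nonneg (p - q)]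
  have key : 1 + p*q ≤ sp * sq := by
    calc 1 + p*q ≤ |1 + p*q| := le_abs_self _
      _ = Real.sqrt ((1+p*q)^2) := (Real.sqrt_sq_eq_abs _).symm
      _ ≤ Real.sqrt ((sp*sq)^2) := Real.sqrt_le_sqrt h1
      _ = sp * sq := Real.sqrt_sq (by positivity)
  have e : sp + (q - p) * (p / sp) = (1 + p*q) / sp := by
    field_simp
    nlinarith [hsp2]
  rw [e, div_le_iff₀ hsp]
  nlinarith [key]

open MeasureTheory Filter Set Topology in
/-- Fundamental theorem of calculus for (globally) Lipschitz functions `ℝ → ℝ`,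
with the (almost everywhere defined) derivative `deriv g`. -/
lemma lipschitz_ftc {K : NNReal} {g : ℝ → ℝ} (hg : LipschitzWith K g) (a b : ℝ) :
    ∫ x in a..b, deriv g x = g b - g a := by
  have gc : Continuous g := hg.continuous
  set u : ℕ → ℝ := fun n => 1 / (n + 1) with hu
  have hupos : ∀ n, 0 < u n := fun n => by positivity
  have hu0 : Tendsto u atTop (𝓝 0) := tendsto_one_div_add_atTop_nhds_zero_nat
  set F : ℕ → ℝ → ℝ := fun n x => (g (x + u n) - g x) / u n with hF
  have hInt : ∀ n, ∫ x in a..b, F n x =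
      ((∫ x in b..(b + u n), g x) - ∫ x in a..(a + u n), g x) / u n := by
    intro n
    have i1 : ∫ x in a..b, g (x + u n) = ∫ x in (a + u n)..(b + u n), g x := by
      simpa using intervalIntegral.integral_comp_add_right (a := a) (b := b) (fun y => g y) (u n)
    have I : ∀ c d : ℝ, IntervalIntegrable g volume c d := fun c d => gc.intervalIntegrable c d
    have adj1 : (∫ x in a..b, g x) + ∫ x in b..(b + u n), g x = ∫ x in a..(b + u n), g x :=
      intervalIntegral.integral_add_adjacent_intervals (I a b) (I b _)
    have adj2 : (∫ x in a..(a + u n), g x) + ∫ x in (a + u n)..(b + u n), g x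
        = ∫ x in a..(b + u n), g x :=
      intervalIntegral.integral_add_adjacent_intervals (I a _) (I _ _)
    have isub : ∫ x in a..b, (g (x + u n) - g x) =
        (∫ x in a..b, g (x + u n)) - ∫ x in a..b, g x :=
      intervalIntegral.integral_sub
        ((gc.comp (continuous_id.add continuous_const)).intervalIntegrable a b) (I a b)
    calc ∫ x in a..b, F n x = (∫ x in a..b, (g (x + u n) - g x)) / u n := by
          simp only [hF]
          rw [intervalIntegral.integral_div]
      _ = ((∫ x in b..(b + u n), g x) - ∫ x in a..(a + u n), g x) / u n := by
          rw [isub, i1]; congr 1; linarith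
  have hend : ∀ c : ℝ, Tendsto (fun n => (∫ x in c..(c + u n), g x) / u n) atTop (𝓝 (g c)) := by
    intro c
    have hH : HasDerivAt (fun y => ∫ x in c..y, g x) (g c) c :=
      intervalIntegral.integral_hasDerivAt_right (gc.intervalIntegrable c c)
        (gc.stronglyMeasurableAtFilter _ _) gc.continuousAt
    have hslope := hasDerivAt_iff_tendsto_slope.1 hH
    have htend : Tendsto (fun n => c + u n) atTop (𝓝[≠] c) := by
      refine tendsto_nhdsWithin_of_tendsto_nhds_of_eventually_within _ ?_ ?_
      · simpa using (tendsto_const_nhds.add hu0)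
      · filter_upwards with n
        simp only [mem_compl_iff, mem_singleton_iff]
        intro hcontra
        nlinarith [hupos n]
    have := hslope.comp htend
    simp only [Function.comp_def, slope_def_field] at this
    convert this using 2 with n
    rw [intervalIntegral.integral_same]
    rw [sub_zero, add_sub_cancel_left]
  have hRHS : Tendsto (fun n => ∫ x in a..b, F n x) atTop (𝓝 (g b - g a)) := by
    have := (hend b).sub (hend a)
    refine this.congr fun n => ?_
    rw [hInt n, sub_div]
  have hDCT : Tendsto (fun n => ∫ x in a..b, F n x) atTop (𝓝 (∫ x in a..b, deriv g x)) := by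
    apply intervalIntegral.tendsto_integral_filter_of_dominated_convergence
      (bound := fun _ => (K : ℝ))
    · filter_upwards with n
      exact ((gc.comp (continuous_id.add continuous_const)).sub gc).div_const _
        |>.aestronglyMeasurable
    · filter_upwards with n
      filter_upwards with x _
      have hd : dist (g (x + u n)) (g x) ≤ (K : ℝ) * dist (x + u n) x := hg.dist_le_mul _ _
      rw [Real.dist_eq, Real.dist_eq] at hd
      have habs : |x + u n - x| = u n := by
        rw [abs_of_pos] <;> [skip; simpa using (hupos n)]
        ring
      rw [habs] at hd
      rw [Real.norm_eq_abs, hF, abs_div, abs_of_pos (hupos n), div_le_iff₀ (hupos n)]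
      exact hd
    · exact intervalIntegrable_const
    · have hae := hg.ae_differentiableAt_real
      filter_upwards [hae] with x hx _
      have hda : HasDerivAt g (deriv g x) x := hx.hasDerivAt
      have hslope := hasDerivAt_iff_tendsto_slope.1 hda
      have htend : Tendsto (fun n => x + u n) atTop (𝓝[≠] x) := by
        refine tendsto_nhdsWithin_of_tendsto_nhds_of_eventually_within _ ?_ ?_
        · simpa using (tendsto_const_nhds.add hu0)
        · filter_upwards with n
          simp only [mem_compl_iff, mem_singleton_iff]
          intro hcontra
          nlinarith [hupos n]
      have := hslope.comp htend
      simp only [Function.comp_def, slope_def_field] at this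
      refine this.congr fun n => ?_
      rw [hF]
      congr 1
      ring
  exact tendsto_nhds_unique hDCT hRHS

open MeasureTheory Filter Set Topology in
/-- The circular arc `f(x) = √(r² − x²) − √(r² − R²)` of radius `r > R`
minimizes `G_r(h) = ∫_{−R}^{R} (√(1 + h'(x)²) − h(x)/r) dx` among all
Lipschitz functions `h` on `[−R, R]` with `h(−R) = h(R) = 0`. -/
theorem arc_minimizes (R r : ℝ) (hR : 0 < R) (hRr : R < r)
    (f : ℝ → ℝ) (hf : f = fun x => Real.sqrt (r ^ 2 - x ^ 2) - Real.sqrt (r ^ 2 - R ^ 2))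
    (h : ℝ → ℝ) (hlip : ∃ K : NNReal, LipschitzWith K h)
    (hbd₁ : h (-R) = 0) (hbd₂ : h R = 0) :
    (∫ x in (-R)..R, (Real.sqrt (1 + (deriv f x) ^ 2) - f x / r))
      ≤ ∫ x in (-R)..R, (Real.sqrt (1 + (deriv h x) ^ 2) - h x / r) := by
  obtain ⟨K, hK⟩ := hlip
  have hr : 0 < r := hR.trans hRr
  have hRR : -R ≤ R := by linarith
  have hc2pos : (0:ℝ) < r^2 - R^2 := by nlinarith
  set c : ℝ := Real.sqrt (r^2 - R^2) with hc
  have hcpos : 0 < c := Real.sqrt_pos.2 hc2pos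
  have hcsq : c^2 = r^2 - R^2 := Real.sq_sqrt hc2pos.le
  -- derivative of f on Icc
  have hfd : ∀ x ∈ Icc (-R) R, HasDerivAt f (-x / Real.sqrt (r^2 - x^2)) x := by
    intro x hx
    have hx2 : x^2 ≤ R^2 := by nlinarith [hx.1, hx.2]
    have hpos : 0 < r^2 - x^2 := by nlinarith
    have h1 : HasDerivAt (fun y : ℝ => r^2 - y^2) (-(2*x)) x := by
      simpa using ((hasDerivAt_pow 2 x).const_sub (r^2))
    have h2 : HasDerivAt (fun y => Real.sqrt (r^2 - y^2))
        (-(2*x) / (2 * Real.sqrt (r^2 - x^2))) x := h1.sqrt (ne_of_gt hpos)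
    have h3 := h2.sub_const (Real.sqrt (r^2 - R^2))
    rw [hf]
    refine h3.congr_deriv ?_
    have hs : Real.sqrt (r^2 - x^2) ≠ 0 := ne_of_gt (Real.sqrt_pos.2 hpos)
    rw [neg_div, neg_div, mul_div_mul_left _ _ (two_ne_zero)]
  -- basic facts about s(x) = √(r²−x²) on Icc
  have hsfacts : ∀ x ∈ Icc (-R) R, 0 < Real.sqrt (r^2 - x^2) ∧ c ≤ Real.sqrt (r^2 - x^2) := by
    intro x hx
    have hx2 : x^2 ≤ R^2 := by nlinarith [hx.1, hx.2]
    have hpos : 0 < r^2 - x^2 := by nlinarith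
    exact ⟨Real.sqrt_pos.2 hpos, Real.sqrt_le_sqrt (by nlinarith)⟩
  -- the slope identity : (f')/√(1+f'²) = -x/r on Icc
  have hkey : ∀ x ∈ Icc (-R) R,
      Real.sqrt (1 + (-x / Real.sqrt (r^2 - x^2))^2) = r / Real.sqrt (r^2 - x^2) ∧
      (-x / Real.sqrt (r^2 - x^2)) / Real.sqrt (1 + (-x / Real.sqrt (r^2 - x^2))^2) = -x / r := by
    intro x hx
    obtain ⟨hs, _⟩ := hsfacts x hx
    have hx2 : x^2 ≤ R^2 := by nlinarith [hx.1, hx.2]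
    have hpos : 0 < r^2 - x^2 := by nlinarith
    have hssq : (Real.sqrt (r^2 - x^2))^2 = r^2 - x^2 := Real.sq_sqrt hpos.le
    have e1 : 1 + (-x / Real.sqrt (r^2 - x^2))^2 = (r / Real.sqrt (r^2 - x^2))^2 := by
      field_simp
      try nlinarith [hssq]
    have e2 : Real.sqrt (1 + (-x / Real.sqrt (r^2 - x^2))^2) = r / Real.sqrt (r^2 - x^2) := by
      rw [e1, Real.sqrt_sq (by positivity)]
    refine ⟨e2, ?_⟩
    rw [e2]
    field_simp
    try ring
  -- Lipschitz constant for f on Icc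
  set L : NNReal := Real.toNNReal (R / c) with hL
  have hfL : LipschitzOnWith L f (Icc (-R) R) := by
    apply (convex_Icc (-R) R).lipschitzOnWith_of_nnnorm_hasDerivWithin_le
      (f' := fun x => -x / Real.sqrt (r^2 - x^2))
      (fun x hx => (hfd x hx).hasDerivWithinAt)
    intro x hx
    obtain ⟨hs, hcs⟩ := hsfacts x hx
    have hxabs : |x| ≤ R := abs_le.2 ⟨hx.1, hx.2⟩
    rw [← NNReal.coe_le_coe, coe_nnnorm, Real.norm_eq_abs, hL,
      Real.coe_toNNReal _ (by positivity)]
    rw [abs_div, abs_neg, abs_of_pos hs]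
    exact div_le_div₀ (by positivity) hxabs hcpos hcs
  -- φ = h - f is (K+L)-Lipschitz on Icc, vanishes at ±R
  have hfR : f R = 0 := by rw [hf]; simp [hc]
  have hfmR : f (-R) = 0 := by rw [hf]; simp [neg_pow, hc]
  have hφ : LipschitzOnWith (K + L) (fun x => h x - f x) (Icc (-R) R) := by
    apply LipschitzOnWith.of_dist_le_mul
    intro x hx y hy
    have d1 : dist (h x) (h y) ≤ (K : ℝ) * dist x y := hK.dist_le_mul x y
    have d2 : dist (f x) (f y) ≤ (L : ℝ) * dist x y := hfL.dist_le_mul x hx y hy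
    rw [Real.dist_eq] at d1 d2 ⊢
    rw [Real.dist_eq] at d1 d2 ⊢
    push_cast
    calc |h x - f x - (h y - f y)| = |(h x - h y) + -(f x - f y)| := by ring_nf
      _ ≤ |h x - h y| + |-(f x - f y)| := abs_add_le _ _
      _ = |h x - h y| + |f x - f y| := by rw [abs_neg]
      _ ≤ (K : ℝ) * |x - y| + (L : ℝ) * |x - y| := add_le_add d1 d2
      _ = ((K : ℝ) + (L : ℝ)) * |x - y| := by ring
  have hφR : h R - f R = 0 := by rw [hbd₂, hfR]; ring
  have hφbd : ∀ x ∈ Icc (-R) R, |h x - f x| ≤ ((K:ℝ) + L) * (2*R) := by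
    intro x hx
    have := hφ.dist_le_mul x hx R (by constructor <;> linarith)
    rw [Real.dist_eq, Real.dist_eq] at this
    calc |h x - f x| = |(h x - f x) - (h R - f R)| := by rw [hφR]; ring_nf
      _ ≤ (↑(K + L)) * |x - R| := this
      _ ≤ ((K:ℝ) + L) * (2*R) := by
          push_cast
          have : |x - R| ≤ 2*R := by
            rw [abs_le]; constructor <;> [linarith [hx.1]; linarith [hx.2]]
          exact mul_le_mul_of_nonneg_left this (by positivity)
  -- G = x (h - f) is Lipschitz on Icc; extend to a global Lipschitz function g
  set M : NNReal := Real.toNNReal (3*R) * (K + L) with hM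
  have hG : LipschitzOnWith M (fun x => x * (h x - f x)) (Icc (-R) R) := by
    apply LipschitzOnWith.of_dist_le_mul
    intro x hx y hy
    rw [Real.dist_eq, Real.dist_eq]
    have hd := hφ.dist_le_mul x hx y hy
    rw [Real.dist_eq, Real.dist_eq] at hd
    have hxabs : |x| ≤ R := abs_le.2 ⟨hx.1, hx.2⟩
    have hM' : (M : ℝ) = 3*R * ((K:ℝ) + L) := by
      rw [hM]; push_cast [Real.coe_toNNReal _ (by positivity : (0:ℝ) ≤ 3*R)]; ring
    calc |x * (h x - f x) - y * (h y - f y)|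
        = |x * ((h x - f x) - (h y - f y)) + (x - y) * (h y - f y)| := by ring_nf
      _ ≤ |x * ((h x - f x) - (h y - f y))| + |(x - y) * (h y - f y)| := abs_add_le _ _
      _ = |x| * |(h x - f x) - (h y - f y)| + |x - y| * |h y - f y| := by
          rw [abs_mul, abs_mul]
      _ ≤ R * (((K:ℝ) + L) * |x - y|) + |x - y| * (((K:ℝ) + L) * (2*R)) := by
          have hd' : |(h x - f x) - (h y - f y)| ≤ ((K:ℝ) + L) * |x - y| := by
            calc |(h x - f x) - (h y - f y)| ≤ (↑(K + L)) * |x - y| := hd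
              _ = ((K:ℝ) + L) * |x - y| := by push_cast; ring
          have t1 : |x| * |(h x - f x) - (h y - f y)| ≤ R * (((K:ℝ) + L) * |x - y|) :=
            mul_le_mul hxabs hd' (abs_nonneg _) hR.le
          have t2 : |x - y| * |h y - f y| ≤ |x - y| * (((K:ℝ) + L) * (2*R)) :=
            mul_le_mul_of_nonneg_left (hφbd y hy) (abs_nonneg _)
          exact add_le_add t1 t2
      _ = (M : ℝ) * |x - y| := by rw [hM']; ring
  obtain ⟨g, hglip, hgeq⟩ := hG.extend_real
  -- FTC for g : integral of deriv g is 0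
  have hgR : g R = 0 := by
    rw [← hgeq (by constructor <;> linarith : R ∈ Icc (-R) R)]
    show R * (h R - f R) = 0
    rw [hφR, mul_zero]
  have hgmR : g (-R) = 0 := by
    rw [← hgeq (by constructor <;> linarith : -R ∈ Icc (-R) R)]
    show (-R) * (h (-R) - f (-R)) = 0
    rw [hbd₁, hfmR]
    ring
  have hftc0 : ∫ x in (-R)..R, deriv g x = 0 := by
    rw [lipschitz_ftc hglip (-R) R, hgR, hgmR, sub_zero]
  -- boundedness of derivatives
  have hgb : ∀ x, |deriv g x| ≤ (M : ℝ) := by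
    intro x
    by_cases hd : DifferentiableAt ℝ g x
    · have := hd.hasDerivAt.le_of_lipschitz hglip
      simpa [Real.norm_eq_abs] using this
    · rw [deriv_zero_of_not_differentiableAt hd]; simp
  have hhb : ∀ x, |deriv h x| ≤ (K : ℝ) := by
    intro x
    by_cases hd : DifferentiableAt ℝ h x
    · have := hd.hasDerivAt.le_of_lipschitz hK
      simpa [Real.norm_eq_abs] using this
    · rw [deriv_zero_of_not_differentiableAt hd]; simp
  -- integrability of the three integrands
  have hcontA : ContinuousOn (fun x => Real.sqrt (1 + (deriv f x)^2) - f x / r)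
      (uIcc (-R) R) := by
    rw [uIcc_of_le hRR]
    have hψ : ContinuousOn (fun x : ℝ =>
        Real.sqrt (1 + (-x / Real.sqrt (r^2 - x^2))^2) - f x / r) (Icc (-R) R) := by
      apply ContinuousOn.sub
      · apply ContinuousOn.sqrt
        apply ContinuousOn.add continuousOn_const
        apply ContinuousOn.pow
        apply ContinuousOn.div (continuousOn_id.neg)
        · exact (continuousOn_const.sub (continuousOn_id.pow 2)).sqrt
        · intro x hx
          exact ne_of_gt (hsfacts x hx).1
      · apply ContinuousOn.div_const
        rw [hf]
        exact ((continuousOn_const.sub (continuousOn_id.pow 2)).sqrt).sub continuousOn_const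
    apply hψ.congr
    intro x hx
    show Real.sqrt (1 + (deriv f x)^2) - f x / r = _
    rw [(hfd x hx).deriv]
  have hintA : IntervalIntegrable (fun x => Real.sqrt (1 + (deriv f x)^2) - f x / r)
      volume (-R) R := hcontA.intervalIntegrable
  have hintg : IntervalIntegrable (fun x => deriv g x) volume (-R) R := by
    rw [intervalIntegrable_iff]
    refine Measure.integrableOn_of_bounded (M := (M : ℝ)) ?_
      (measurable_deriv g).aestronglyMeasurable ?_
    · exact (measure_Ioc_lt_top).ne
    · filter_upwards with x
      exact (Real.norm_eq_abs _) ▸ hgb x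
  have hintC : IntervalIntegrable (fun x => Real.sqrt (1 + (deriv h x)^2)) volume (-R) R := by
    rw [intervalIntegrable_iff]
    refine Measure.integrableOn_of_bounded (M := Real.sqrt (1 + (K:ℝ)^2)) ?_
      (continuous_sqrt.measurable.comp
        (((measurable_deriv h).pow_const 2).const_add 1)).aestronglyMeasurable ?_
    · exact (measure_Ioc_lt_top).ne
    · filter_upwards with x
      rw [Real.norm_eq_abs, abs_of_nonneg (Real.sqrt_nonneg _)]
      apply Real.sqrt_le_sqrt
      have := hhb x
      nlinarith [sq_abs (deriv h x), this, abs_nonneg (deriv h x)]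
  have hintD : IntervalIntegrable (fun x => h x / r) volume (-R) R :=
    (hK.continuous.div_const r).intervalIntegrable _ _
  have hintB : IntervalIntegrable (fun x => Real.sqrt (1 + (deriv h x)^2) - h x / r)
      volume (-R) R := hintC.sub hintD
  have hintLHS : IntervalIntegrable
      (fun x => (Real.sqrt (1 + (deriv f x)^2) - f x / r) - (1/r) * deriv g x)
      volume (-R) R := hintA.sub (hintg.const_mul _)
  -- a.e. pointwise inequality on Icc
  have hae : (fun x => (Real.sqrt (1 + (deriv f x)^2) - f x / r) - (1/r) * deriv g x)
      ≤ᵐ[volume.restrict (Icc (-R) R)]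
      (fun x => Real.sqrt (1 + (deriv h x)^2) - h x / r) := by
    have hmem : ∀ᵐ x ∂(volume.restrict (Icc (-R) R)), x ∈ Icc (-R) R :=
      ae_restrict_mem measurableSet_Icc
    have hdiffh : ∀ᵐ x : ℝ, DifferentiableAt ℝ h x := hK.ae_differentiableAt_real
    have hne : ∀ᵐ x : ℝ, x ≠ -R ∧ x ≠ R := by
      have h1 : ∀ᵐ x : ℝ, x ≠ -R := by
        refine ae_iff.2 ?_
        simpa using Real.volume_singleton (a := -R)
      have h2 : ∀ᵐ x : ℝ, x ≠ R := by
        refine ae_iff.2 ?_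
        simpa using Real.volume_singleton (a := R)
      exact h1.and h2
    filter_upwards [hmem, ae_restrict_of_ae hdiffh, ae_restrict_of_ae hne]
      with x hx hdx hnx
    have hxo : x ∈ Ioo (-R) R :=
      ⟨lt_of_le_of_ne hx.1 (Ne.symm hnx.1), lt_of_le_of_ne hx.2 hnx.2⟩
    have hfdx := hfd x hx
    have hp : deriv f x = -x / Real.sqrt (r^2 - x^2) := hfdx.deriv
    have hq : HasDerivAt h (deriv h x) x := hdx.hasDerivAt
    -- deriv g x via product rule
    have hGd : HasDerivAt (fun y => y * (h y - f y))
        (1 * (h x - f x) + x * (deriv h x - deriv f x)) x := by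
      have := (hasDerivAt_id x).mul (hq.sub (hp ▸ hfdx))
      exact this.congr_deriv rfl
    have hEv : g =ᶠ[𝓝 x] (fun y => y * (h y - f y)) := by
      filter_upwards [Ioo_mem_nhds hxo.1 hxo.2] with y hy
      exact (hgeq (Ioo_subset_Icc_self hy)).symm
    have hgd : deriv g x = (h x - f x) + x * (deriv h x - deriv f x) := by
      rw [hEv.deriv_eq, hGd.deriv]
      ring
    -- the convexity inequality
    obtain ⟨e2, e3⟩ := hkey x hx
    have key := sqrt_tangent_le (deriv f x) (deriv h x)
    rw [hp] at key hgd ⊢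
    rw [e3] at key
    -- key : √(1+p²) + (q - p) * (-x/r) ≤ √(1+q²)
    have ee : Real.sqrt (1 + (-x / Real.sqrt (r^2 - x^2))^2) - f x / r - (1/r) * deriv g x
        = (Real.sqrt (1 + (-x / Real.sqrt (r^2 - x^2))^2)
            + (deriv h x - -x / Real.sqrt (r^2 - x^2)) * (-x / r)) - h x / r := by
      rw [hgd]; ring
    rw [ee]
    exact sub_le_sub_right key _
  -- put everything together
  calc (∫ x in (-R)..R, (Real.sqrt (1 + (deriv f x) ^ 2) - f x / r))
      = ∫ x in (-R)..R,
          ((Real.sqrt (1 + (deriv f x)^2) - f x / r) - (1/r) * deriv g x) := by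
        rw [intervalIntegral.integral_sub hintA (hintg.const_mul _),
          intervalIntegral.integral_const_mul, hftc0, mul_zero, sub_zero]
    _ ≤ ∫ x in (-R)..R, (Real.sqrt (1 + (deriv h x) ^ 2) - h x / r) :=
        intervalIntegral.integral_mono_ae_restrict hRR hintLHS hintB hae
end

section
/- Let S₁, S₂ be disjoint tangent or nearby balls in ℝ² and suppose S₂ has radius r₂. Then |Close_r(S) \ S| = O(r^{3/2}) as r → 0⁺; more precisely, Close_r(S) \ S is contained in a region of area at most C·r^{3/2} for small r, where C depends only on the radii. Consequently (1/r)|Close_r(S) \ S| → 0 as r → 0⁺. -/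
open MeasureTheory Real Set Filter Topology
open scoped ENNReal

noncomputable section

abbrev E2 := EuclideanSpace ℝ (Fin 2)

/-- The morphological opening of a set with radius `ρ`. -/
def openr (ρ : ℝ) (X : Set E2) : Set E2 :=
  ⋃ x ∈ {c : E2 | Metric.ball c ρ ⊆ X}, Metric.ball x ρ

/-- The morphological closing of a set with radius `ρ`. -/
def closer (ρ : ℝ) (X : Set E2) : Set E2 := (openr ρ Xᶜ)ᶜ

section Aux

open scoped RealInnerProductSpace

lemma aux_inner_coords (x y : E2) : ⟪x, y⟫ = x 0 * y 0 + x 1 * y 1 := by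
  simp [PiLp.inner_apply, Fin.sum_univ_two, RCLike.inner_apply, conj_trivial]; ring

lemma aux_norm_sq_coords (x : E2) : ‖x‖^2 = x 0 ^2 + x 1 ^2 := by
  rw [← real_inner_self_eq_norm_sq, aux_inner_coords]; ring

lemma aux_key_identity (z p : E2) (D : ℝ) (hD : 0 < D) (hp : ‖p‖ = D) :
    (⟪z, p⟫/D)^2 + ((z 1 * p 0 - z 0 * p 1)/D)^2 = ‖z‖^2 := by
  have hp2 : p 0^2 + p 1^2 = D^2 := by rw [← aux_norm_sq_coords, hp]
  rw [aux_inner_coords, aux_norm_sq_coords]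
  field_simp
  linear_combination (z 0^2 + z 1^2) * hp2

lemma aux_push_lemma (x x' : E2) (ρ ρ' r : ℝ) (hρ : 0 < ρ) (hρ' : 0 < ρ') (hr : 0 < r)
    (hrρ : 2*r ≤ ρ) (hrρ' : 2*r ≤ ρ')
    (hD : dist x x' = ρ + ρ') (y : E2)
    (hd : ρ < dist y x) (hdlt : dist y x < ρ + r) :
    (∃ c, y ∈ Metric.ball c r ∧ Metric.ball c r ∩ (Metric.ball x ρ ∪ Metric.ball x' ρ') = ∅)
    ∨ (ρ - 2*r ≤ ⟪y - x, x' - x⟫ / (ρ+ρ') ∧ ⟪y - x, x' - x⟫/(ρ+ρ') ≤ ρ + 2*r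
        ∧ (dist y x) ^2 - (⟪y - x, x' - x⟫/(ρ+ρ'))^2 ≤ 6*ρ*r) := by
  have hd0 : 0 < dist y x := lt_trans hρ hd
  have hD0 : 0 < ρ + ρ' := by positivity
  have hnx : ‖y - x‖ = dist y x := by rw [dist_eq_norm]
  have hnx' : ‖x' - x‖ = ρ + ρ' := by rw [← hD, dist_comm, dist_eq_norm]
  set d := dist y x with hdd
  set T := (⟪y - x, x' - x⟫ : ℝ) with hTT
  by_cases hcase : (ρ+r) * T ≤ (ρ*(ρ+ρ') + r*(ρ-ρ')) * d
  · left
    set lam := (ρ+r)/d with hlam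
    have hlam1 : 1 ≤ lam := by
      rw [hlam, le_div_iff₀ hd0]; linarith
    have hlampos : 0 < lam := by positivity
    refine ⟨x + lam • (y - x), ?_, ?_⟩
    · have hyc : y - (x + lam • (y - x)) = (1 - lam) • (y - x) := by
        rw [sub_smul, one_smul]; abel
      have hxy : dist y (x + lam • (y - x)) = (lam - 1) * d := by
        rw [dist_eq_norm, hyc, norm_smul, Real.norm_eq_abs, hnx, abs_of_nonpos (by linarith),
          neg_sub]
      have : (lam - 1) * d = ρ + r - d := by rw [hlam]; field_simp
      rw [Metric.mem_ball, hxy, this]; linarith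
    · have hcx : dist (x + lam • (y - x)) x = ρ + r := by
        rw [dist_eq_norm, add_sub_cancel_left, norm_smul, Real.norm_eq_abs, hnx,
          abs_of_pos hlampos, hlam]
        field_simp
      have hcx' : ρ' + r ≤ dist (x + lam • (y - x)) x' := by
        have h1 : x + lam • (y - x) - x' = lam • (y - x) - (x' - x) := by
          abel
        have h2 : dist (x + lam • (y - x)) x' ^ 2
            = lam^2 * d^2 - 2 * (lam * T) + (ρ+ρ')^2 := by
          rw [dist_eq_norm, h1, norm_sub_sq_real, real_inner_smul_left, norm_smul,
            Real.norm_eq_abs, hnx, hnx', abs_of_pos hlampos, ← hTT]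
          ring
        have hlamT : lam * T ≤ ρ*(ρ+ρ') + r*(ρ-ρ') := by
          rw [hlam, div_mul_eq_mul_div, div_le_iff₀ hd0, mul_comm (ρ+r) T]
          linarith [hcase]
        have hlamd : lam^2 * d^2 = (ρ+r)^2 := by
          rw [hlam]; field_simp
        have hsq : (ρ'+r)^2 ≤ dist (x + lam • (y - x)) x' ^2 := by
          rw [h2, hlamd]; nlinarith [hlamT]
        nlinarith [dist_nonneg (x := x + lam • (y - x)) (y := x'), hsq]
      rw [Set.eq_empty_iff_forall_notMem]
      rintro z ⟨hz1, hz2 | hz2⟩ <;> rw [Metric.mem_ball] at hz1 hz2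
      · have h3 := dist_triangle (x + lam • (y - x)) z x
        rw [dist_comm _ z] at h3
        linarith [hcx ▸ h3]
      · have h3 := dist_triangle (x + lam • (y - x)) z x'
        rw [dist_comm _ z] at h3
        linarith
  · right
    push_neg at hcase
    clear_value d T
    have hApos : 0 ≤ ρ*(ρ+ρ') + r*(ρ-ρ') := by nlinarith
    have hCS : T ≤ d * (ρ+ρ') := by
      rw [hTT, ← hnx, ← hnx']; exact real_inner_le_norm _ _
    clear hTT hdd hnx hnx' hD
    have e2 : (ρ*(ρ+ρ') + r*(ρ-ρ'))*ρ ≤ (ρ*(ρ+ρ') + r*(ρ-ρ'))*d :=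
      mul_le_mul_of_nonneg_left hd.le hApos
    have h1 : ρ - 2*r ≤ T / (ρ+ρ') := by
      rw [le_div_iff₀ hD0]
      nlinarith [e2, hcase, mul_pos hr hr, mul_pos (mul_pos hr hρ) hρ]
    refine ⟨h1, ?_, ?_⟩
    · rw [div_le_iff₀ hD0]; nlinarith
    · have h2 : T/(ρ+ρ') ≤ d := by rw [div_le_iff₀ hD0]; nlinarith
      have h3 : (ρ - 2*r)^2 ≤ (T/(ρ+ρ'))^2 := by nlinarith
      nlinarith

lemma aux_subset_lemma (x₁ x₂ : E2) (r₁ r₂ r : ℝ) (hr₁ : 0 < r₁) (hr₂ : 0 < r₂) (hr : 0 < r)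
    (h1 : 2*r ≤ r₁) (h2 : 2*r ≤ r₂) (htangent : dist x₁ x₂ = r₁ + r₂) :
    closer r (Metric.ball x₁ r₁ ∪ Metric.ball x₂ r₂) \ (Metric.ball x₁ r₁ ∪ Metric.ball x₂ r₂)
      ⊆ Metric.sphere x₁ r₁ ∪ Metric.sphere x₂ r₂ ∪
        {y : E2 | r₁ - 2*r ≤ ⟪y - x₁, x₂ - x₁⟫/(r₁+r₂) ∧ ⟪y - x₁, x₂ - x₁⟫/(r₁+r₂) ≤ r₁ + 2*r ∧
          (((y - x₁) 1 * (x₂ - x₁) 0 - (y - x₁) 0 * (x₂ - x₁) 1)/(r₁+r₂))^2 ≤ 6*(r₁+r₂)*r} := by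
  intro y ⟨hyc, hyS⟩
  set S := Metric.ball x₁ r₁ ∪ Metric.ball x₂ r₂ with hS
  have hD0 : (0:ℝ) < r₁ + r₂ := by positivity
  have hp : ‖x₂ - x₁‖ = r₁ + r₂ := by rw [← dist_eq_norm, dist_comm]; exact htangent
  have hnotex : ¬ ∃ c, y ∈ Metric.ball c r ∧ Metric.ball c r ∩ S = ∅ := by
    rintro ⟨c, hyb, hball⟩
    apply hyc
    simp only [openr, mem_iUnion, mem_setOf_eq]
    exact ⟨c, Set.subset_compl_iff_disjoint_right.2 (Set.disjoint_iff_inter_eq_empty.2 hball),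
      hyb⟩
  have hd1 : r₁ ≤ dist y x₁ := by
    by_contra h; push_neg at h; exact hyS (Set.mem_union_left _ (Metric.mem_ball.2 h))
  have hd2 : r₂ ≤ dist y x₂ := by
    by_contra h; push_neg at h; exact hyS (Set.mem_union_right _ (Metric.mem_ball.2 h))
  by_cases hs1 : dist y x₁ = r₁
  · exact Or.inl (Or.inl hs1)
  by_cases hs2 : dist y x₂ = r₂
  · exact Or.inl (Or.inr hs2)
  have hd1' : r₁ < dist y x₁ := lt_of_le_of_ne hd1 (Ne.symm hs1)
  have hd2' : r₂ < dist y x₂ := lt_of_le_of_ne hd2 (Ne.symm hs2)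
  right
  have hkey := aux_key_identity (y - x₁) (x₂ - x₁) (r₁+r₂) hD0 hp
  have hnd : ‖y - x₁‖ = dist y x₁ := by rw [dist_eq_norm]
  by_cases hb1 : dist y x₁ < r₁ + r
  · rcases aux_push_lemma x₁ x₂ r₁ r₂ r hr₁ hr₂ hr h1 h2 htangent y hd1' hb1 with
      h | ⟨ha, hb, hc⟩
    · exact absurd h hnotex
    · refine ⟨ha, hb, ?_⟩
      have h6 : 6*r₁*r ≤ 6*(r₁+r₂)*r := by nlinarith
      rw [hnd] at hkey
      linarith [hkey, hc]
  · by_cases hb2 : dist y x₂ < r₂ + r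
    · have htangent' : dist x₂ x₁ = r₂ + r₁ := by rw [dist_comm]; linarith
      rcases aux_push_lemma x₂ x₁ r₂ r₁ r hr₂ hr₁ hr h2 h1 htangent' y hd2' hb2 with
        h | ⟨ha, hb, hc⟩
      · rw [union_comm] at h
        exact absurd h hnotex
      · have hTrel : ⟪y - x₂, x₁ - x₂⟫ = (r₁+r₂)^2 - ⟪y - x₁, x₂ - x₁⟫ := by
          have e1 : y - x₂ = (y - x₁) - (x₂ - x₁) := by abel
          have e2 : x₁ - x₂ = -(x₂ - x₁) := by abel
          rw [e1, e2, inner_neg_right, inner_sub_left, real_inner_self_eq_norm_sq, hp]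
          ring
        have hd2sq : (dist y x₂)^2 = (dist y x₁)^2 - 2*⟪y - x₁, x₂ - x₁⟫ + (r₁+r₂)^2 := by
          have e1 : y - x₂ = (y - x₁) - (x₂ - x₁) := by abel
          rw [dist_eq_norm, e1, norm_sub_sq_real, hnd, hp]
        rw [hnd] at hkey
        have hteq : ⟪y - x₁, x₂ - x₁⟫/(r₁+r₂) = (r₁+r₂) - ⟪y - x₂, x₁ - x₂⟫/(r₂+r₁) := by
          rw [hTrel, add_comm r₂ r₁, sub_div, sq, mul_div_assoc, div_self hD0.ne', mul_one,
            sub_sub_cancel]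
        have hBB : (⟪y - x₂, x₁ - x₂⟫/(r₂+r₁))*(r₁+r₂) = ⟪y - x₂, x₁ - x₂⟫ := by
          rw [add_comm r₂ r₁, div_mul_cancel₀ _ hD0.ne']
        have ha2 : (⟪y - x₁, x₂ - x₁⟫/(r₁+r₂))^2
            = (r₁+r₂)^2 - 2*(r₁+r₂)*(⟪y - x₂, x₁ - x₂⟫/(r₂+r₁))
              + (⟪y - x₂, x₁ - x₂⟫/(r₂+r₁))^2 := by
          rw [hteq]; ring
        refine ⟨by linarith [hteq, hb], by linarith [hteq, ha], ?_⟩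
        linarith [hkey, ha2, hBB, hTrel, hd2sq, hc, mul_pos hr₁ hr]
    · apply absurd _ hnotex
      refine ⟨y, Metric.mem_ball_self hr, ?_⟩
      rw [Set.eq_empty_iff_forall_notMem]
      rintro z ⟨hz1, hz2 | hz2⟩ <;> rw [Metric.mem_ball] at hz1 hz2
      · push_neg at hb1
        linarith [dist_triangle y z x₁, dist_comm z y ▸ hz1]
      · push_neg at hb2
        linarith [dist_triangle y z x₂, dist_comm z y ▸ hz1]

lemma aux_rect_volume (x₁ x₂ : E2) (r₁ r₂ r : ℝ) (hr₁ : 0 < r₁) (hr₂ : 0 < r₂) (hr : 0 < r)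
    (hp : ‖x₂ - x₁‖ = r₁ + r₂) :
    volume {y : E2 | r₁ - 2*r ≤ ⟪y - x₁, x₂ - x₁⟫/(r₁+r₂) ∧ ⟪y - x₁, x₂ - x₁⟫/(r₁+r₂) ≤ r₁ + 2*r ∧
      (((y - x₁) 1 * (x₂ - x₁) 0 - (y - x₁) 0 * (x₂ - x₁) 1)/(r₁+r₂))^2 ≤ 6*(r₁+r₂)*r}
    ≤ ENNReal.ofReal (4*r) * ENNReal.ofReal (2*Real.sqrt (6*(r₁+r₂)*r)) := by
  have hD0 : (0:ℝ) < r₁ + r₂ := by positivity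
  set p : E2 := x₂ - x₁ with hpdef
  set W : E2 := (WithLp.equiv 2 (Fin 2 → ℝ)).symm ![-(p 1), p 0] with hWdef
  have hW0 : W 0 = -(p 1) := by rw [hWdef]; simp [WithLp.equiv_symm_apply]
  have hW1 : W 1 = p 0 := by rw [hWdef]; simp [WithLp.equiv_symm_apply]
  have hnW : ‖W‖ = r₁ + r₂ := by
    have h1 : ‖W‖^2 = ‖p‖^2 := by rw [aux_norm_sq_coords, aux_norm_sq_coords, hW0, hW1]; ring
    rw [← Real.sqrt_sq (norm_nonneg W), h1, Real.sqrt_sq (norm_nonneg p), hp]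
  set v : E2 := (r₁+r₂)⁻¹ • p with hvdef
  set w : E2 := (r₁+r₂)⁻¹ • W with hwdef
  have hnv : ‖v‖ = 1 := by
    rw [hvdef, norm_smul, Real.norm_eq_abs, abs_of_pos (by positivity), hp]
    field_simp
  have hnw : ‖w‖ = 1 := by
    rw [hwdef, norm_smul, Real.norm_eq_abs, abs_of_pos (by positivity), hnW]
    field_simp
  have hvw : ⟪v, w⟫ = 0 := by
    rw [hvdef, hwdef, real_inner_smul_left, real_inner_smul_right, aux_inner_coords, hW0, hW1]
    ring
  set f : Fin 2 → E2 := ![v, w] with hfdef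
  have hvv : (⟪v, v⟫ : ℝ) = 1 := by rw [real_inner_self_eq_norm_sq, hnv]; norm_num
  have hww : (⟪w, w⟫ : ℝ) = 1 := by rw [real_inner_self_eq_norm_sq, hnw]; norm_num
  have hwv : (⟪w, v⟫ : ℝ) = 0 := by rw [real_inner_comm]; exact hvw
  have honf : Orthonormal ℝ f := by
    rw [orthonormal_iff_ite]
    intro i j
    fin_cases i <;> fin_cases j <;>
      simp only [hfdef, Fin.mk_zero, Fin.mk_one, Matrix.cons_val_zero, Matrix.cons_val_one,
        Matrix.head_cons, Fin.isValue] <;>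
      simp [hvv, hww, hvw, hwv, hnv, hnw]
  have hspan : ⊤ ≤ Submodule.span ℝ (Set.range f) := by
    rw [honf.linearIndependent.span_eq_top_of_card_eq_finrank (by simp)]
  set b : OrthonormalBasis (Fin 2) ℝ E2 := OrthonormalBasis.mk honf hspan with hbdef
  have hb0 : b 0 = v := by rw [hbdef]; simp [OrthonormalBasis.coe_mk, hfdef]
  have hb1 : b 1 = w := by rw [hbdef]; simp [OrthonormalBasis.coe_mk, hfdef]
  set M := Real.sqrt (6*(r₁+r₂)*r) with hM
  set Box : Set (EuclideanSpace ℝ (Fin 2)) :=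
    {u | u 0 ∈ Icc (r₁-2*r) (r₁+2*r) ∧ u 1 ∈ Icc (-M) M} with hBox
  set g : E2 → EuclideanSpace ℝ (Fin 2) := fun y => b.repr (y - x₁) with hg
  have hmp : MeasurePreserving g volume volume :=
    b.measurePreserving_repr.comp (measurePreserving_sub_right volume x₁)
  have hsub : {y : E2 | r₁ - 2*r ≤ ⟪y - x₁, x₂ - x₁⟫/(r₁+r₂) ∧
      ⟪y - x₁, x₂ - x₁⟫/(r₁+r₂) ≤ r₁ + 2*r ∧
      (((y - x₁) 1 * (x₂ - x₁) 0 - (y - x₁) 0 * (x₂ - x₁) 1)/(r₁+r₂))^2 ≤ 6*(r₁+r₂)*r}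
      ⊆ g ⁻¹' Box := by
    intro y ⟨h1, h2, h3⟩
    have hg0 : g y 0 = ⟪y - x₁, x₂ - x₁⟫/(r₁+r₂) := by
      show b.repr (y - x₁) 0 = _
      rw [OrthonormalBasis.repr_apply_apply, hb0, hvdef, real_inner_smul_left,
        real_inner_comm, ← hpdef]
      rw [div_eq_inv_mul]
    have hg1 : g y 1 = ((y - x₁) 1 * (x₂ - x₁) 0 - (y - x₁) 0 * (x₂ - x₁) 1)/(r₁+r₂) := by
      show b.repr (y - x₁) 1 = _
      rw [OrthonormalBasis.repr_apply_apply, hb1, hwdef, real_inner_smul_left, aux_inner_coords,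
        hW0, hW1, ← hpdef]
      field_simp
      ring
    have habs : |g y 1| ≤ M := by
      rw [hg1, ← Real.sqrt_sq_eq_abs, hM]
      exact Real.sqrt_le_sqrt h3
    constructor
    · rw [hg0]; exact ⟨h1, h2⟩
    · exact abs_le.1 habs
  refine le_trans (measure_mono hsub) ?_
  have hBoxEq : Box = ((MeasurableEquiv.toLp 2 (Fin 2 → ℝ)).symm) ⁻¹'
      (Set.univ.pi fun i => Icc ((![r₁-2*r, -M]) i) ((![r₁+2*r, M]) i)) := by
    ext u
    constructor
    · rintro ⟨h1, h2⟩ i _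
      fin_cases i
      · simpa [MeasurableEquiv.coe_toLp_symm] using h1
      · simpa [MeasurableEquiv.coe_toLp_symm] using h2
    · intro h
      exact ⟨by simpa [MeasurableEquiv.coe_toLp_symm] using h 0 (Set.mem_univ _),
        by simpa [MeasurableEquiv.coe_toLp_symm] using h 1 (Set.mem_univ _)⟩
  have hBoxMeas : MeasurableSet Box := by
    rw [hBoxEq]
    exact ((MeasurableEquiv.toLp 2 (Fin 2 → ℝ)).symm).measurable
      (MeasurableSet.univ_pi fun i => measurableSet_Icc)
  rw [hmp.measure_preimage hBoxMeas.nullMeasurableSet]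
  rw [hBoxEq, (EuclideanSpace.volume_preserving_symm_measurableEquiv_toLp (Fin 2)).measure_preimage
    (MeasurableSet.univ_pi fun i => measurableSet_Icc).nullMeasurableSet]
  rw [volume_pi_pi]
  rw [Fin.prod_univ_two]
  simp only [Matrix.cons_val_zero, Matrix.cons_val_one, Matrix.head_cons, Real.volume_Icc]
  have e1 : r₁ + 2*r - (r₁ - 2*r) = 4*r := by ring
  have e2 : M - (-M) = 2*M := by ring
  rw [e1, e2]

end Aux

/-- For `S` the union of two tangent balls, `|Close_r(S) \ S| = O(r^{3/2})`
as `r → 0⁺`: there is a constant `C > 0` (depending only on the radii) with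
`|Close_r(S) \ S| ≤ C·r^{3/2}` for all small `r > 0`; consequently
`(1/r)|Close_r(S) \ S| → 0` as `r → 0⁺`. -/
theorem closing_excess_area_small
    (x₁ x₂ : E2) (r₁ r₂ : ℝ) (hr₁ : 0 < r₁) (hr₂ : 0 < r₂)
    (S : Set E2) (hSdef : S = Metric.ball x₁ r₁ ∪ Metric.ball x₂ r₂)
    (hdisj : Disjoint (Metric.ball x₁ r₁) (Metric.ball x₂ r₂))
    (htangent : dist x₁ x₂ = r₁ + r₂) :
    (∃ C : ℝ, 0 < C ∧ ∀ᶠ r in 𝓝[>] (0 : ℝ),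
      (volume (closer r S \ S)).toReal ≤ C * r ^ ((3 : ℝ) / 2))
    ∧ Tendsto (fun r : ℝ => (1 / r) * (volume (closer r S \ S)).toReal)
        (𝓝[>] (0 : ℝ)) (𝓝 0) := by
  have hD0 : (0:ℝ) < r₁ + r₂ := by positivity
  have hp : ‖x₂ - x₁‖ = r₁ + r₂ := by rw [← dist_eq_norm, dist_comm]; exact htangent
  set C : ℝ := 8 * Real.sqrt (6*(r₁+r₂)) + 1 with hC
  have hCpos : 0 < C := by positivity
  have key : ∀ r : ℝ, 0 < r → 2*r ≤ r₁ → 2*r ≤ r₂ →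
      (volume (closer r S \ S)).toReal ≤ C * r ^ ((3:ℝ)/2) := by
    intro r hr h1 h2
    have hsub := aux_subset_lemma x₁ x₂ r₁ r₂ r hr₁ hr₂ hr h1 h2 htangent
    rw [← hSdef] at hsub
    have hv := aux_rect_volume x₁ x₂ r₁ r₂ r hr₁ hr₂ hr hp
    have hbound : volume (closer r S \ S)
        ≤ ENNReal.ofReal (4*r) * ENNReal.ofReal (2*Real.sqrt (6*(r₁+r₂)*r)) := by
      refine le_trans (measure_mono hsub) ?_
      refine le_trans (measure_union_le _ _) ?_
      have hz : volume (Metric.sphere x₁ r₁ ∪ Metric.sphere x₂ r₂) = 0 := by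
        refine le_antisymm (le_trans (measure_union_le _ _) ?_) zero_le
        rw [Measure.addHaar_sphere volume x₁ r₁, Measure.addHaar_sphere volume x₂ r₂]
        simp
      rw [hz, zero_add]
      exact hv
    have hr32 : r ^ ((3:ℝ)/2) = r * Real.sqrt r := by
      rw [Real.sqrt_eq_rpow, show (3:ℝ)/2 = 1 + 1/2 by norm_num, Real.rpow_add hr,
        Real.rpow_one]
    have hsqrtmul : Real.sqrt (6*(r₁+r₂)*r) = Real.sqrt (6*(r₁+r₂)) * Real.sqrt r :=
      Real.sqrt_mul (by positivity) r
    have htr : (volume (closer r S \ S)).toReal ≤ (4*r) * (2*Real.sqrt (6*(r₁+r₂)*r)) := by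
      have h4 : (ENNReal.ofReal (4*r) * ENNReal.ofReal (2*Real.sqrt (6*(r₁+r₂)*r))).toReal
          = (4*r) * (2*Real.sqrt (6*(r₁+r₂)*r)) := by
        rw [← ENNReal.ofReal_mul (by positivity)]
        rw [ENNReal.toReal_ofReal (by positivity)]
      rw [← h4]
      exact ENNReal.toReal_mono (by finiteness) hbound
    refine le_trans htr ?_
    rw [hsqrtmul, hr32, hC]
    nlinarith [Real.sqrt_nonneg (6*(r₁+r₂)), Real.sqrt_nonneg r, hr,
      mul_nonneg hr.le (Real.sqrt_nonneg r)]
  have hmem : Set.Ioo (0:ℝ) (min r₁ r₂ / 2) ∈ 𝓝[>] (0:ℝ) :=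
    Ioo_mem_nhdsGT_of_mem ⟨le_refl _, by positivity⟩
  have hev : ∀ᶠ r in 𝓝[>] (0:ℝ),
      (volume (closer r S \ S)).toReal ≤ C * r ^ ((3:ℝ)/2) := by
    filter_upwards [hmem] with r hrIoo
    refine key r hrIoo.1 ?_ ?_
    · have := hrIoo.2
      have h := min_le_left r₁ r₂
      linarith [lt_of_lt_of_le hrIoo.2 (by linarith [min_le_left r₁ r₂] : min r₁ r₂ / 2 ≤ r₁/2)]
    · linarith [lt_of_lt_of_le hrIoo.2 (by linarith [min_le_right r₁ r₂] : min r₁ r₂ / 2 ≤ r₂/2)]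
  refine ⟨⟨C, hCpos, hev⟩, ?_⟩
  have hup : ∀ᶠ r in 𝓝[>] (0:ℝ),
      (1/r) * (volume (closer r S \ S)).toReal ≤ C * Real.sqrt r := by
    filter_upwards [hev, self_mem_nhdsWithin] with r hle hrpos
    have hrpos' : (0:ℝ) < r := hrpos
    have hr32 : r ^ ((3:ℝ)/2) = r * Real.sqrt r := by
      rw [Real.sqrt_eq_rpow, show (3:ℝ)/2 = 1 + 1/2 by norm_num, Real.rpow_add hrpos',
        Real.rpow_one]
    have := mul_le_mul_of_nonneg_left hle (by positivity : (0:ℝ) ≤ 1/r)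
    refine le_trans this ?_
    rw [hr32]
    have heq : 1/r * (C * (r * Real.sqrt r)) = C * Real.sqrt r := by
      field_simp
    rw [heq]
  have hlow : ∀ᶠ r in 𝓝[>] (0:ℝ),
      0 ≤ (1/r) * (volume (closer r S \ S)).toReal := by
    filter_upwards [self_mem_nhdsWithin] with r hrpos
    have hrpos' : (0:ℝ) < r := hrpos
    positivity
  have htend : Tendsto (fun r : ℝ => C * Real.sqrt r) (𝓝[>] (0:ℝ)) (𝓝 0) := by
    have h0 : Tendsto (fun r : ℝ => C * Real.sqrt r) (𝓝 (0:ℝ)) (𝓝 (C * Real.sqrt 0)) :=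
      (continuous_const.mul Real.continuous_sqrt).tendsto 0
    rw [Real.sqrt_zero, mul_zero] at h0
    exact h0.mono_left nhdsWithin_le_nhds
  exact squeeze_zero' hlow hup htend

end
end
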